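/- If x is an ultrafilter on ℕ such that the <*-unbounded family {f_ξ : ξ < 𝔟} (fixed <*-increasing, strictly increasing functions) is unbounded in <_x, and A is a converging family of infinite subsets to x, then the family { f_ξ ∘ next(a,·) : ξ < 𝔟, a ∈ A } is <*-dominating in ℕ^ℕ. -/
import Mathlib


open Set Filter Cardinal

/-- `a ⊆* b` : `a` is almost contained in `b` (mod finite). -/
def almostLE (a b : Set ℕ) : Prop := (a \ b).Finite

/-- `f <* g` : eventual domination mod finite. -/
def domLT (f g : ℕ → ℕ) : Prop := {k | g k ≤ f k}.Finite

/-- The bounding number 𝔟. -/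
noncomputable def bNum : Cardinal :=
  sInf { c | ∃ F : Set (ℕ → ℕ), Cardinal.mk F = c ∧ ∀ g : ℕ → ℕ, ∃ f ∈ F, ¬ domLT f g }

/-- The dominating number 𝔡. -/
noncomputable def dNum : Cardinal :=
  sInf { c | ∃ F : Set (ℕ → ℕ), Cardinal.mk F = c ∧ ∀ g : ℕ → ℕ, ∃ f ∈ F, domLT g f }

/-- `c` reaps the family `A`. -/
def Reaps (c : Set ℕ) (A : Set (Set ℕ)) : Prop :=
  ∀ a ∈ A, (a ∩ c).Infinite ∧ (a \ c).Infinite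

/-- The reaping number 𝔯. -/
noncomputable def rNum : Cardinal :=
  sInf { c | ∃ A : Set (Set ℕ), Cardinal.mk A = c ∧ (∀ a ∈ A, a.Infinite) ∧
    ∀ d : Set ℕ, ¬ Reaps d A }

/-- The splitting number 𝔰. -/
noncomputable def sNum : Cardinal :=
  sInf { c | ∃ A : Set (Set ℕ), Cardinal.mk A = c ∧ ∀ b : Set ℕ, b.Infinite →
    ∃ a ∈ A, (b ∩ a).Infinite ∧ (b \ a).Infinite }

/-- `next(a,k)`, the least element of `a` above `k`. -/
noncomputable def nxt (a : Set ℕ) (k : ℕ) : ℕ := sInf {n | n ∈ a ∧ k < n}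

/-- ℕ*, the Stone–Čech remainder, realized as the space of free ultrafilters on ℕ. -/
abbrev NStar : Type := {x : Ultrafilter ℕ // (Filter.cofinite : Filter ℕ) ≤ ↑x}

/-- For `a ⊆ ℕ`, the basic clopen set `a*` of free ultrafilters containing `a`. -/
def setStar (a : Set ℕ) : Set NStar := {x | a ∈ x.1}

/-- The ideal `I_A = { a ⊆ ℕ : a* ⊆ A }`. -/
def idealOf (A : Set NStar) : Set (Set ℕ) := {a | setStar a ⊆ A}

/-- `A` is almost clopen: the closure of an open set with a unique boundary point. -/
def AlmostClopen (A : Set NStar) : Prop :=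
  (∃ U : Set NStar, IsOpen U ∧ A = closure U) ∧ ∃! x : NStar, x ∈ frontier A

/-- `x` is a tie-point as witnessed by the closed sets `A`, `B`. -/
def TiePoint {X : Type*} [TopologicalSpace X] (x : X) (A B : Set X) : Prop :=
  IsClosed A ∧ IsClosed B ∧ A ∪ B = Set.univ ∧ A ∩ B = {x} ∧
    x ∈ closure (A \ {x}) ∧ x ∈ closure (B \ {x})

/-- An almost clopen set `A` is simple of type `κ`: `I_A` has a strictly ⊆*-increasing,
⊆*-cofinal chain of order type `κ`. -/
def SimpleType (A : Set NStar) (κ : Cardinal) : Prop :=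
  ∃ a : Ordinal → Set ℕ,
    (∀ α, α < κ.ord → a α ∈ idealOf A) ∧
    (∀ α β, α < β → β < κ.ord → almostLE (a α) (a β) ∧ (a β \ a α).Infinite) ∧
    (∀ c ∈ idealOf A, ∃ α, α < κ.ord ∧ almostLE c (a α))

/-- The family `A` converges to the ultrafilter `x`. -/
def Converges (A : Set (Set ℕ)) (x : Ultrafilter ℕ) : Prop :=
  ∀ U ∈ x, Cardinal.mk {a : Set ℕ // a ∈ A ∧ (a \ U).Infinite} < Cardinal.mk A

/-- `A` is hereditarily unreapable. -/
def HeredUnreapable (A : Set (Set ℕ)) : Prop :=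
  ∀ B ⊆ A, (∃ c : Set ℕ, Reaps c B) → Cardinal.mk B < Cardinal.mk A

/-- `f <_x g` for an ultrafilter `x`. -/
def ultLT (x : Ultrafilter ℕ) (f g : ℕ → ℕ) : Prop := {n | f n < g n} ∈ x

/-- A fixed `<*`-increasing `<*`-unbounded family `{f_ξ : ξ < 𝔟}` of strictly increasing
functions. -/
def UnbddChain (f : Ordinal → ℕ → ℕ) : Prop :=
  (∀ ξ, ξ < bNum.ord → StrictMono (f ξ)) ∧
  (∀ η ξ, η < ξ → ξ < bNum.ord → domLT (f η) (f ξ)) ∧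
  (∀ g : ℕ → ℕ, ∃ ξ, ξ < bNum.ord ∧ ¬ domLT (f ξ) g)

/-- `x` is an almost `P_λ`-point. -/
def AlmostPPoint (x : Ultrafilter ℕ) (lam : Cardinal) : Prop :=
  ∀ F : Set (Set ℕ), (∀ U ∈ F, U ∈ x) → Cardinal.mk F < lam →
    ∃ p : Set ℕ, p.Infinite ∧ ∀ U ∈ F, almostLE p U

theorem stmt8 (x : Ultrafilter ℕ) (hx : (Filter.cofinite : Filter ℕ) ≤ ↑x)
    (f : Ordinal → ℕ → ℕ) (hf : UnbddChain f)
    (hunbdd : ∀ g : ℕ → ℕ, ∃ ξ, ξ < bNum.ord ∧ ¬ ultLT x (f ξ) g)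
    (A : Set (Set ℕ)) (hAinf : ∀ a ∈ A, a.Infinite)
    (hconv : Converges A x) :
    ∀ g : ℕ → ℕ, ∃ ξ, ξ < bNum.ord ∧ ∃ a ∈ A, domLT g (fun k => f ξ (nxt a k)) := by
  intro g
  -- h n bounds g on [0,n)
  set h : ℕ → ℕ := fun n => (Finset.range n).sup g + 1 with hh
  obtain ⟨ξ, hξ, hnot⟩ := hunbdd h
  refine ⟨ξ, hξ, ?_⟩
  have hU : {n | h n ≤ f ξ n} ∈ x := by
    have := (Ultrafilter.compl_mem_iff_notMem (s := {n | f ξ n < h n}) (f := x)).2 hnot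
    have heq : {n | f ξ n < h n}ᶜ = {n | h n ≤ f ξ n} := by
      ext n; simp [not_lt]
    rwa [heq] at this
  have hcard := hconv _ hU
  -- find a ∈ A with (a \ U) finite
  have : ∃ a ∈ A, ¬ (a \ {n | h n ≤ f ξ n}).Infinite := by
    by_contra hno
    push_neg at hno
    have : (Cardinal.mk ↥A : Cardinal) ≤
        Cardinal.mk {a : Set ℕ // a ∈ A ∧ (a \ {n | h n ≤ f ξ n}).Infinite} := by
      refine Cardinal.mk_le_of_injective
        (f := fun a : ↥A => ⟨a.1, a.2, hno a.1 a.2⟩) ?_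
      intro a b hab
      simp only [Subtype.mk.injEq] at hab
      exact Subtype.ext hab
    exact absurd hcard (not_lt.2 this)
  obtain ⟨a, haA, hfin⟩ := this
  rw [Set.not_infinite] at hfin
  refine ⟨a, haA, ?_⟩
  have hainf := hAinf a haA
  obtain ⟨N, hN⟩ : ∃ N, ∀ m ∈ a \ {n | h n ≤ f ξ n}, m ≤ N :=
    ⟨hfin.toFinset.sup id, fun m hm => Finset.le_sup (f := id) (hfin.mem_toFinset.2 hm)⟩
  have key : ∀ k, N ≤ k → g k < f ξ (nxt a k) := by
    intro k hk
    have hne : {n | n ∈ a ∧ k < n}.Nonempty := by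
      obtain ⟨m, hma, hmk⟩ := hainf.exists_gt k
      exact ⟨m, hma, hmk⟩
    have hmem : nxt a k ∈ {n | n ∈ a ∧ k < n} := Nat.sInf_mem hne
    obtain ⟨hna, hnk⟩ := hmem
    have hnU : nxt a k ∈ {n | h n ≤ f ξ n} := by
      by_contra hc
      have := hN (nxt a k) ⟨hna, hc⟩
      omega
    have h1 : g k < h (nxt a k) := by
      have : g k ≤ (Finset.range (nxt a k)).sup g :=
        Finset.le_sup (Finset.mem_range.2 hnk)
      simp only [hh]; omega
    exact lt_of_lt_of_le h1 hnU
  have : {k | f ξ (nxt a k) ≤ g k} ⊆ Set.Iio N := by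
    intro k hk
    by_contra hc
    have := key k (le_of_not_gt (by simpa [Set.mem_Iio] using hc))
    exact absurd hk (by simp only [Set.mem_setOf_eq, not_le]; exact this)
  exact Set.Finite.subset (Set.finite_Iio N) this
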